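/- arXiv:2408.04093 — 2 statements merged into one kernel-verified Lean document; each statement's English description precedes it below -/
import Mathlib

section
/- Correctness of chunked flash-attention recombination with local maxima: partition {1,...,N} into chunks B₁,...,B_p, let m_j = max_{a∈B_j} q·kₐ, lse_j = log(∑_{a∈B_j} exp(q·kₐ)), o_j = (∑_{a∈B_j} exp(q·kₐ) vₐ)/(∑_{a∈B_j} exp(q·kₐ)), and global max M = max_j lse_j. Then ∑_j o_j · exp(lse_j − M) divided by ∑_j exp(lse_j − M) equals the full attention output (∑_{a=1}^N exp(q·kₐ) vₐ)/(∑_{a=1}^N exp(q·kₐ)). -/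
/-- Correctness of chunked flash-attention recombination with local log-sum-exps:
rescaling local outputs by exp(lse_j − M) and renormalizing recovers full attention. -/
theorem flash_attention_recombination (N d p : ℕ) (hN : 1 ≤ N) (hp : 1 ≤ p)
    (q : Fin d → ℝ) (k v : Fin N → Fin d → ℝ)
    (B : Fin p → Finset (Fin N))
    (hdisj : ∀ i j, i ≠ j → Disjoint (B i) (B j))
    (hne : ∀ j, (B j).Nonempty)
    (hcover : ∀ a : Fin N, ∃ j, a ∈ B j)
    (M : ℝ)
    (hM : M = Finset.univ.sup' ⟨⟨0, hp⟩, Finset.mem_univ _⟩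
        (fun j => Real.log (∑ a ∈ B j, Real.exp (∑ i, q i * k a i))))
    (A : Fin d) :
    (∑ j, ((∑ a ∈ B j, Real.exp (∑ i, q i * k a i) * v a A)
            / (∑ a ∈ B j, Real.exp (∑ i, q i * k a i)))
          * Real.exp (Real.log (∑ a ∈ B j, Real.exp (∑ i, q i * k a i)) - M))
        / (∑ j, Real.exp (Real.log (∑ a ∈ B j, Real.exp (∑ i, q i * k a i)) - M))
      = (∑ a, Real.exp (∑ i, q i * k a i) * v a A)
        / ∑ a, Real.exp (∑ i, q i * k a i) := by
  set f : Fin N → ℝ := fun a => Real.exp (∑ i, q i * k a i) with hf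
  have hSpos : ∀ j, 0 < ∑ a ∈ B j, f a := fun j =>
    Finset.sum_pos (fun a _ => Real.exp_pos _) (hne j)
  have hexp : ∀ j, Real.exp (Real.log (∑ a ∈ B j, f a) - M)
      = (∑ a ∈ B j, f a) * Real.exp (-M) := by
    intro j
    rw [Real.exp_sub, Real.exp_log (hSpos j), Real.exp_neg, div_eq_mul_inv]
  have hnum : (∑ j, ((∑ a ∈ B j, f a * v a A) / (∑ a ∈ B j, f a))
        * Real.exp (Real.log (∑ a ∈ B j, f a) - M))
      = (∑ j, ∑ a ∈ B j, f a * v a A) * Real.exp (-M) := by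
    rw [Finset.sum_mul]
    refine Finset.sum_congr rfl fun j _ => ?_
    rw [hexp j]
    field_simp
    rw [mul_div_cancel_right₀ _ (hSpos j).ne']
  have hden : (∑ j, Real.exp (Real.log (∑ a ∈ B j, f a) - M))
      = (∑ j, ∑ a ∈ B j, f a) * Real.exp (-M) := by
    rw [Finset.sum_mul]
    exact Finset.sum_congr rfl fun j _ => hexp j
  have hpart : ∀ g : Fin N → ℝ, (∑ j, ∑ a ∈ B j, g a) = ∑ a, g a := by
    intro g
    rw [← Finset.sum_biUnion (fun i _ j _ hij => hdisj i j hij)]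
    apply Finset.sum_congr _ (fun _ _ => rfl)
    apply Finset.eq_univ_iff_forall.mpr
    intro a
    obtain ⟨j, hj⟩ := hcover a
    exact Finset.mem_biUnion.mpr ⟨j, Finset.mem_univ j, hj⟩
  rw [hnum, hden, hpart, hpart, mul_div_mul_right _ _ (Real.exp_ne_zero _)]
end

section
/- Communication volume comparison: for all integers p ≥ 2, b ≥ 1, t ≥ 1, d ≥ 1, n_h ≥ 1 with n_h ≤ t·d, the Tree Attention communication volume 2·((p−1)/p)·(b·d + 2·b·n_h) is strictly less than the Ring Attention communication volume 2·b·t·d·p. -/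
/-- Tree Attention's communication volume is strictly less than Ring Attention's. -/
theorem tree_comm_volume_lt_ring (p b t d nh : ℕ)
    (hp : 2 ≤ p) (hb : 1 ≤ b) (ht : 1 ≤ t) (hd : 1 ≤ d) (hnh : 1 ≤ nh)
    (h : nh ≤ t * d) :
    2 * (((p : ℝ) - 1) / (p : ℝ)) * ((b : ℝ) * d + 2 * b * nh)
      < 2 * (b : ℝ) * t * d * p := by
  have hpR : (2:ℝ) ≤ p := by exact_mod_cast hp
  have hbR : (1:ℝ) ≤ b := by exact_mod_cast hb
  have htR : (1:ℝ) ≤ t := by exact_mod_cast ht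
  have hdR : (1:ℝ) ≤ d := by exact_mod_cast hd
  have hhR : (nh:ℝ) ≤ (t:ℝ) * d := by exact_mod_cast h
  have hp0 : (0:ℝ) < p := by linarith
  rw [show 2 * (((p : ℝ) - 1) / (p : ℝ)) * ((b : ℝ) * d + 2 * b * nh)
      = 2 * ((p:ℝ) - 1) * ((b : ℝ) * d + 2 * b * nh) / p from by ring,
    div_lt_iff₀ hp0]
  have hbtd : (1:ℝ) ≤ (b:ℝ) * t * d := by nlinarith
  have hx : (b:ℝ) * d + 2 * b * nh ≤ 3 * ((b:ℝ) * t * d) := by nlinarith [mul_le_mul_of_nonneg_left hhR (by positivity : (0:ℝ) ≤ (b:ℝ)), mul_le_mul_of_nonneg_left htR (by positivity : (0:ℝ) ≤ (b:ℝ) * d)]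
  have hcoef : 3 * ((p:ℝ) - 1) < (p:ℝ) * p := by nlinarith [sq_nonneg ((p:ℝ) - 2)]
  have h1 := mul_le_mul_of_nonneg_left hx (by linarith : (0:ℝ) ≤ 2 * ((p:ℝ) - 1))
  have h2 := mul_lt_mul_of_pos_right hcoef (by linarith : (0:ℝ) < (b:ℝ) * t * d)
  nlinarith [h1, h2]
end
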